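/- If f ∈ L¹(ℝ²) ∩ L^∞(ℝ²) and K(x) = x^⊥/(2π|x|²), then for any ρ > 0 and any x ∈ ℝ², |(K*f)(x)| ≤ (ρ/2)‖f‖_{L^∞} + (1/(2πρ))‖f‖_{L¹}; optimizing over ρ yields |(K*f)(x)| ≤ π^{-1/2} ‖f‖_{L¹}^{1/2} ‖f‖_{L^∞}^{1/2}. -/

import Mathlib

open MeasureTheory Metric Set Filter RealInnerProductSpace
noncomputable section
abbrev E2 := EuclideanSpace ℝ (Fin 2)
def perp (x : E2) : E2 := !₂[-x 1, x 0]

def K (x : E2) : E2 := (1/(2 * Real.pi * ‖x‖^2) : ℝ) • perp x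

lemma norm_perp (x : E2) : ‖perp x‖ = ‖x‖ := by
  rw [EuclideanSpace.norm_eq, EuclideanSpace.norm_eq]
  congr 1
  simp [perp, Fin.sum_univ_two]
  ring

lemma perp_zero : perp (0 : E2) = 0 := by
  ext i
  fin_cases i <;> simp [perp]

lemma K_zero : K (0 : E2) = 0 := by simp [K, perp_zero]

lemma norm_K {x : E2} (hx : x ≠ 0) : ‖K x‖ = 1 / (2 * Real.pi * ‖x‖) := by
  have h : (0:ℝ) < ‖x‖ := norm_pos_iff.2 hx
  rw [K, norm_smul, norm_perp, Real.norm_eq_abs, abs_of_pos (by positivity)]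
  field_simp

lemma measurable_K : Measurable K := by
  apply Measurable.smul (f := fun x : E2 => (1/(2 * Real.pi * ‖x‖^2) : ℝ)) (g := perp)
  · have : Measurable fun x : E2 => 2 * Real.pi * ‖x‖ ^ 2 := by measurability
    simp only [one_div]; exact this.inv
  · apply (PiLp.continuous_toLp 2 _).measurable.comp
    apply measurable_pi_lambda
    intro i
    fin_cases i <;> simp [perp] <;> measurability

lemma lint_neg {G : Type*} [MeasurableSpace G] [SubtractionMonoid G] [MeasurableNeg G]
    (μ : Measure G) [μ.IsNegInvariant] (g : G → ENNReal) :
    ∫⁻ y, g (-y) ∂μ = ∫⁻ y, g y ∂μ := by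
  conv_rhs => rw [← Measure.map_neg_eq_self μ,
    show (Neg.neg : G → G) = ⇑(MeasurableEquiv.neg G) from rfl,
    lintegral_map_equiv g (MeasurableEquiv.neg G)]
  rfl

lemma lint_trans (g : E2 → ENNReal) (x : E2) :
    ∫⁻ y : E2, g (x - y) = ∫⁻ y, g y := by
  simp_rw [sub_eq_add_neg]
  rw [lint_neg volume (fun z => g (x + z))]
  exact lintegral_add_left_eq_self g x

lemma oneD (c : ℝ) (hc : 0 < c) :
    IntegrableOn (fun t : ℝ => ((t + c) ^ 2)⁻¹) (Ioi 0) ∧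
    ∫ t in Ioi (0:ℝ), ((t + c) ^ 2)⁻¹ = c⁻¹ := by
  have hderiv : ∀ t ∈ Ioi (0:ℝ), HasDerivAt (fun t : ℝ => -(t + c)⁻¹) (((t + c) ^ 2)⁻¹) t := by
    intro t ht
    have h0 : t + c ≠ 0 := by nlinarith [ht.out]
    have := (((hasDerivAt_id t).add_const c).inv h0).neg
    exact this.congr_deriv (by simp only [id]; ring)
  have hcont : ContinuousWithinAt (fun t : ℝ => -(t + c)⁻¹) (Ici 0) 0 := by
    apply ContinuousAt.continuousWithinAt
    have h0 : (0:ℝ) + c ≠ 0 := by simpa using hc.ne'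
    exact (((continuous_id.add continuous_const).continuousAt).inv₀ h0).neg
  have hpos : ∀ t ∈ Ioi (0:ℝ), 0 ≤ ((t + c) ^ 2)⁻¹ := fun t ht => by positivity
  have htend : Tendsto (fun t : ℝ => -(t + c)⁻¹) atTop (nhds 0) := by
    rw [show (0:ℝ) = -0 by ring]
    exact (Tendsto.comp tendsto_inv_atTop_zero (tendsto_atTop_add_const_right _ c tendsto_id)).neg
  refine ⟨integrableOn_Ioi_deriv_of_nonneg hcont hderiv hpos htend, ?_⟩
  rw [integral_Ioi_of_hasDerivAt_of_nonneg hcont hderiv hpos htend]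
  simp

lemma key_kernel (ρ : ℝ) (hρ : 0 < ρ) :
    ∫⁻ z : E2, ENNReal.ofReal (max (‖K z‖ - 1/(2*Real.pi*ρ)) 0) = ENNReal.ofReal (ρ/2) := by
  have hπ := Real.pi_pos
  set c : ℝ := 1/(2*Real.pi*ρ) with hc_def
  have hc : 0 < c := by positivity
  have hmeas : Measurable fun z : E2 => max (‖K z‖ - c) 0 :=
    (measurable_K.norm.sub measurable_const).max measurable_const
  rw [lintegral_eq_lintegral_meas_lt (f := fun z : E2 => max (‖K z‖ - c) 0) volume
    (ae_of_all _ fun z => le_max_right _ _) hmeas.aemeasurable]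
  have hset : ∀ t ∈ Ioi (0:ℝ), volume {z : E2 | t < max (‖K z‖ - c) 0}
      = ENNReal.ofReal ((1/(4*Real.pi)) * ((t+c)^2)⁻¹) := by
    intro t ht
    have ht0 : (0:ℝ) < t := ht
    have htc : 0 < t + c := by positivity
    set r : ℝ := 1/(2*Real.pi*(t+c)) with hr_def
    have hr : 0 < r := by positivity
    have hseteq : {z : E2 | t < max (‖K z‖ - c) 0} = Metric.ball (0:E2) r \ {0} := by
      ext z
      simp only [mem_setOf_eq, mem_diff, mem_ball, mem_singleton_iff, dist_zero_right]
      constructor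
      · intro h
        have h1 : t + c < ‖K z‖ := by
          rcases le_or_gt (‖K z‖ - c) 0 with h' | h'
          · rw [max_eq_right h'] at h; linarith
          · rw [max_eq_left h'.le] at h; linarith
        have hz : z ≠ 0 := by
          rintro rfl
          rw [K_zero, norm_zero] at h1
          linarith
        rw [norm_K hz] at h1
        have hznorm : 0 < ‖z‖ := norm_pos_iff.2 hz
        refine ⟨?_, hz⟩
        rw [hr_def]
        rw [lt_div_iff₀ (by positivity)] at h1 ⊢
        nlinarith
      · rintro ⟨h1, hz⟩
        have hznorm : 0 < ‖z‖ := norm_pos_iff.2 hz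
        have h2 : t + c < ‖K z‖ := by
          rw [norm_K hz]
          rw [hr_def] at h1
          rw [lt_div_iff₀ (by positivity)] at h1 ⊢
          nlinarith
        have : t < ‖K z‖ - c := by linarith
        exact lt_max_of_lt_left this
    rw [hseteq, measure_diff_null (measure_singleton 0), EuclideanSpace.volume_ball]
    rw [← ENNReal.ofReal_pow hr.le, ← ENNReal.ofReal_mul (by positivity)]
    congr 1
    rw [Fintype.card_fin]
    rw [Real.sq_sqrt hπ.le]
    norm_num
    rw [hr_def]
    field_simp
    ring
  rw [setLIntegral_congr_fun measurableSet_Ioi hset]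
  simp_rw [ENNReal.ofReal_mul (by positivity : (0:ℝ) ≤ 1/(4*Real.pi))]
  rw [lintegral_const_mul' _ _ ENNReal.ofReal_ne_top]
  obtain ⟨hint, hval⟩ := oneD c hc
  rw [← ofReal_integral_eq_lintegral_ofReal hint
    (ae_of_all _ fun t => by positivity), hval, ← ENNReal.ofReal_mul (by positivity)]
  congr 1
  rw [hc_def]
  field_simp
  ring

lemma main1 (f : E2 → ℝ) (hf1 : MemLp f 1 (volume : Measure E2))
    (hfinf : MemLp f ⊤ (volume : Measure E2)) (ρ : ℝ) (hρ : 0 < ρ) (x : E2) :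
    ‖∫ y : E2, f y • K (x - y)‖ ≤
      (ρ/2) * (eLpNorm f ⊤ volume).toReal + (1/(2 * Real.pi * ρ)) * (eLpNorm f 1 volume).toReal := by
  have hπ := Real.pi_pos
  set c : ℝ := 1/(2*Real.pi*ρ) with hc_def
  have hc : 0 < c := by positivity
  set A := (eLpNorm f ⊤ volume).toReal with hA_def
  set B := (eLpNorm f 1 volume).toReal with hB_def
  have hA0 : 0 ≤ A := ENNReal.toReal_nonneg
  have hB0 : 0 ≤ B := ENNReal.toReal_nonneg
  have hAeq : ENNReal.ofReal A = eLpNorm f ⊤ volume := ENNReal.ofReal_toReal hfinf.2.ne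
  have hBeq : ENNReal.ofReal B = eLpNorm f 1 volume := ENNReal.ofReal_toReal hf1.2.ne
  have hfa : ∀ᵐ y : E2, (‖f y‖₊ : ENNReal) ≤ ENNReal.ofReal A := by
    filter_upwards [ae_le_eLpNormEssSup (f := f) (μ := (volume : Measure E2))] with y hy
    rw [hAeq, eLpNorm_exponent_top]
    exact hy
  have hmeasmax : Measurable fun y : E2 => ENNReal.ofReal (max (‖K (x - y)‖ - c) 0) :=
    (((measurable_K.comp (measurable_const.sub measurable_id)).norm.sub
      measurable_const).max measurable_const).ennreal_ofReal
  have key : (‖∫ y : E2, f y • K (x - y)‖₊ : ENNReal) ≤ ENNReal.ofReal ((ρ/2) * A + c * B) := by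
    calc (‖∫ y : E2, f y • K (x - y)‖₊ : ENNReal)
        ≤ ∫⁻ y, ‖f y • K (x - y)‖₊ := enorm_integral_le_lintegral_enorm _
      _ ≤ ∫⁻ y, (ENNReal.ofReal A * ENNReal.ofReal (max (‖K (x - y)‖ - c) 0)
            + ENNReal.ofReal c * ‖f y‖₊) := by
          refine lintegral_mono_ae ?_
          filter_upwards [hfa] with y hy
          rw [nnnorm_smul, ENNReal.coe_mul]
          have h2 : (‖K (x - y)‖₊ : ENNReal)
              ≤ ENNReal.ofReal (max (‖K (x - y)‖ - c) 0) + ENNReal.ofReal c := by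
            rw [← enorm_eq_nnnorm, ← ofReal_norm_eq_enorm, ← ENNReal.ofReal_add (le_max_right _ _) hc.le]
            exact ENNReal.ofReal_le_ofReal (by
              rcases le_total (‖K (x - y)‖ - c) 0 with h | h
              · rw [max_eq_right h]; linarith
              · rw [max_eq_left h]; linarith)
          calc (‖f y‖₊ : ENNReal) * ‖K (x - y)‖₊
              ≤ ‖f y‖₊ * (ENNReal.ofReal (max (‖K (x - y)‖ - c) 0) + ENNReal.ofReal c) :=
                mul_le_mul_right h2 _
            _ = ‖f y‖₊ * ENNReal.ofReal (max (‖K (x - y)‖ - c) 0)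
                  + ‖f y‖₊ * ENNReal.ofReal c := mul_add _ _ _
            _ ≤ _ := add_le_add (mul_le_mul_left hy _) (by rw [mul_comm])
      _ = ENNReal.ofReal A * ENNReal.ofReal (ρ/2) + ENNReal.ofReal c * ENNReal.ofReal B := by
          refine (lintegral_add_left' ((hmeasmax.const_mul _).aemeasurable) _).trans ?_
          congr 1
          · refine (lintegral_const_mul' (ENNReal.ofReal A) _ ENNReal.ofReal_ne_top).trans ?_
            congr 1
            rw [← key_kernel ρ hρ]
            exact lint_trans (fun z => ENNReal.ofReal (max (‖K z‖ - c) 0)) x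
          · refine (lintegral_const_mul' (ENNReal.ofReal c) _ ENNReal.ofReal_ne_top).trans ?_
            congr 1
            rw [hBeq, eLpNorm_one_eq_lintegral_enorm]
            rfl
      _ = ENNReal.ofReal ((ρ/2) * A + c * B) := by
          rw [mul_comm (ENNReal.ofReal A) (ENNReal.ofReal (ρ/2)),
            ← ENNReal.ofReal_mul (by positivity : (0:ℝ) ≤ ρ/2), ← ENNReal.ofReal_mul hc.le,
            ← ENNReal.ofReal_add (mul_nonneg (by positivity) hA0) (mul_nonneg hc.le hB0)]
  have h := ENNReal.toReal_mono ENNReal.ofReal_ne_top key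
  rw [ENNReal.coe_toReal, coe_nnnorm,
    ENNReal.toReal_ofReal (by nlinarith [mul_nonneg hc.le hB0, mul_nonneg hρ.le hA0])] at h
  exact h

theorem stmt4 (f : E2 → ℝ)
    (hf1 : MemLp f 1 (volume : Measure E2)) (hfinf : MemLp f ⊤ (volume : Measure E2)) :
    (∀ ρ : ℝ, 0 < ρ → ∀ x : E2,
        ‖∫ y : E2, f y • K (x - y)‖ ≤
          (ρ/2) * (eLpNorm f ⊤ volume).toReal + (1/(2 * Real.pi * ρ)) * (eLpNorm f 1 volume).toReal)
    ∧ ∀ x : E2,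
        ‖∫ y : E2, f y • K (x - y)‖ ≤
          Real.pi ^ (-(1/2) : ℝ) * (eLpNorm f 1 volume).toReal ^ (1/2 : ℝ) *
            (eLpNorm f ⊤ volume).toReal ^ (1/2 : ℝ) := by
  have hπ := Real.pi_pos
  refine ⟨fun ρ hρ x => main1 f hf1 hfinf ρ hρ x, fun x => ?_⟩
  set A := (eLpNorm f ⊤ volume).toReal with hA_def
  set B := (eLpNorm f 1 volume).toReal with hB_def
  have hRHS0 : 0 ≤ Real.pi ^ (-(1/2) : ℝ) * B ^ (1/2 : ℝ) * A ^ (1/2 : ℝ) := by positivity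
  have hzero : ∀ (_ : f =ᵐ[volume] 0),
      ‖∫ y : E2, f y • K (x - y)‖ ≤ Real.pi ^ (-(1/2) : ℝ) * B ^ (1/2 : ℝ) * A ^ (1/2 : ℝ) := by
    intro hf0
    have h0 : (fun y : E2 => f y • K (x - y)) =ᵐ[volume] 0 := by
      filter_upwards [hf0] with y hy
      simp only [Pi.zero_apply] at hy ⊢
      rw [hy, zero_smul]
    rw [integral_congr_ae h0]
    simpa using hRHS0
  by_cases hA : eLpNorm f ⊤ volume = 0
  · exact hzero ((eLpNorm_eq_zero_iff hfinf.aestronglyMeasurable (by simp)).1 hA)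
  by_cases hB : eLpNorm f 1 volume = 0
  · exact hzero ((eLpNorm_eq_zero_iff hf1.aestronglyMeasurable (by simp)).1 hB)
  have hA' : 0 < A := ENNReal.toReal_pos hA hfinf.2.ne
  have hB' : 0 < B := ENNReal.toReal_pos hB hf1.2.ne
  have hA1 : 0 < Real.sqrt A := Real.sqrt_pos.2 hA'
  have hB1 : 0 < Real.sqrt B := Real.sqrt_pos.2 hB'
  have hπ1 : 0 < Real.sqrt Real.pi := Real.sqrt_pos.2 hπ
  set ρ : ℝ := Real.sqrt B / (Real.sqrt Real.pi * Real.sqrt A) with hρ_def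
  have hρ : 0 < ρ := by positivity
  refine (main1 f hf1 hfinf ρ hρ x).trans (le_of_eq ?_)
  have hA2 : Real.sqrt A ^ 2 = A := Real.sq_sqrt hA'.le
  have hB2 : Real.sqrt B ^ 2 = B := Real.sq_sqrt hB'.le
  have hπ2 : Real.sqrt Real.pi ^ 2 = Real.pi := Real.sq_sqrt hπ.le
  rw [Real.rpow_neg hπ.le, ← Real.sqrt_eq_rpow, ← Real.sqrt_eq_rpow, ← Real.sqrt_eq_rpow,
    hρ_def]
  have hAe : (eLpNormEssSup f volume).toReal = A := by rw [hA_def, eLpNorm_exponent_top]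
  field_simp
  linear_combination
    (-Real.sqrt B^2*Real.pi) * hA_def + (-Real.sqrt Real.pi^2*Real.sqrt A^2) * hB_def
      + (Real.sqrt A^2*B) * hπ2 + (-Real.pi*Real.sqrt A^2) * hB2
      + (-Real.sqrt B^2*Real.pi) * hA2
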